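/- Caputo-derivative product identity (used in the proof of Theorem 2.1): let α ∈ (0,1), T > 0, X a real Banach space, and f : [0,T] → X continuously differentiable. Then for every t ∈ (0,T], t·∫_0^t k_{1−α}(t−s) f'(s) ds = ∫_0^t k_{1−α}(t−s) (d/ds)(s f(s)) ds − α·∫_0^t k_{1−α}(t−s) f(s) ds − t·k_{1−α}(t)·f(0); equivalently, writing ∂_t^α g(t) = ∫_0^t k_{1−α}(t−s) g'(s) ds for the Caputo derivative, t·∂_t^α f(t) = ∂_t^α (t f)(t) − α∫_0^t k_{1−α}(t−s) f(s) ds − t k_{1−α}(t) f(0). -/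

import Mathlib

open MeasureTheory intervalIntegral Set

/-- Interval integrability of `s ↦ (τ-s)^r • G s` on `[0,τ]` for `r > -1` and
`G` continuous on `[0,τ]`. -/
lemma caputo_aux_integrable {X : Type*} [NormedAddCommGroup X] [NormedSpace ℝ X]
    {τ r : ℝ} (hτ : 0 < τ) (hr : -1 < r) {G : ℝ → X}
    (hG : ContinuousOn G (Set.Icc 0 τ)) :
    IntervalIntegrable (fun s => ((τ - s) ^ r : ℝ) • G s) volume 0 τ := by
  have h1 : IntervalIntegrable (fun s : ℝ => (τ - s) ^ r) volume 0 τ := by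
    have := (intervalIntegral.intervalIntegrable_rpow' (a := 0) (b := τ) hr).comp_sub_left τ
    simpa using this.symm
  rw [intervalIntegrable_iff_integrableOn_Ioc_of_le hτ.le] at h1 ⊢
  have h2 : IntegrableOn (fun s : ℝ => (τ - s) ^ r) (Set.Icc 0 τ) volume := by
    rwa [integrableOn_Icc_iff_integrableOn_Ioc]
  exact (h2.smul_continuousOn hG isCompact_Icc).mono_set Set.Ioc_subset_Icc_self

/-- Caputo-derivative product identity (used in the proof of Theorem 2.1):
for `f : [0,T] → X` continuously differentiable and `t ∈ (0,T]`, writing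
`k_{1-α}(s) = s^{-α}/Γ(1-α)`,
`t ∫₀ᵗ k_{1-α}(t-s) f'(s) ds = ∫₀ᵗ k_{1-α}(t-s) (d/ds)(s f(s)) ds
  - α ∫₀ᵗ k_{1-α}(t-s) f(s) ds - t k_{1-α}(t) f(0)`. -/
theorem caputo_product_identity
    (α T : ℝ) {X : Type*} [NormedAddCommGroup X] [NormedSpace ℝ X] [CompleteSpace X]
    (f f' : ℝ → X)
    (hα0 : 0 < α) (hα1 : α < 1) (hT : 0 < T)
    (hf : ∀ s ∈ Set.Icc (0 : ℝ) T, HasDerivWithinAt f (f' s) (Set.Icc (0 : ℝ) T) s)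
    (hf' : ContinuousOn f' (Set.Icc (0 : ℝ) T)) :
    ∀ τ ∈ Set.Ioc (0 : ℝ) T,
      τ • ∫ s in (0 : ℝ)..τ, ((τ - s) ^ (-α) / Real.Gamma (1 - α)) • f' s
        = (∫ s in (0 : ℝ)..τ, ((τ - s) ^ (-α) / Real.Gamma (1 - α)) • (f s + s • f' s))
          - α • (∫ s in (0 : ℝ)..τ, ((τ - s) ^ (-α) / Real.Gamma (1 - α)) • f s)
          - (τ * (τ ^ (-α) / Real.Gamma (1 - α))) • f 0 := by
  intro τ hτmem
  obtain ⟨hτ, hτT⟩ := hτmem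
  set Γ := Real.Gamma (1 - α) with hΓ
  have hsub : Set.Icc (0 : ℝ) τ ⊆ Set.Icc 0 T := Set.Icc_subset_Icc le_rfl hτT
  have hfc : ContinuousOn f (Set.Icc 0 T) := fun s hs => (hf s hs).continuousWithinAt
  have hfcτ : ContinuousOn f (Set.Icc 0 τ) := hfc.mono hsub
  have hf'cτ : ContinuousOn f' (Set.Icc 0 τ) := hf'.mono hsub
  have hrα : (-1 : ℝ) < -α := by linarith
  have hrβ : (-1 : ℝ) < 1 - α := by linarith
  have h1α : (1 : ℝ) - α ≠ 0 := by linarith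
  -- integrability facts
  have hA : IntervalIntegrable (fun s => ((τ - s) ^ (-α) : ℝ) • f' s) volume 0 τ :=
    caputo_aux_integrable hτ hrα hf'cτ
  have hB : IntervalIntegrable (fun s => ((τ - s) ^ (-α) : ℝ) • f s) volume 0 τ :=
    caputo_aux_integrable hτ hrα hfcτ
  have hC : IntervalIntegrable (fun s => ((τ - s) ^ (1 - α) : ℝ) • f' s) volume 0 τ :=
    caputo_aux_integrable hτ hrβ hf'cτ
  have hB' : IntervalIntegrable (fun s => (-(1 - α) * (τ - s) ^ (-α)) • f s) volume 0 τ := by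
    have heq : (fun s => (-(1 - α) * (τ - s) ^ (-α)) • f s)
        = fun s => ((τ - s) ^ (-α) : ℝ) • ((-(1 - α)) • f s) := by
      funext s; rw [smul_smul, mul_comm]
    rw [heq]
    exact caputo_aux_integrable hτ hrα (hfcτ.const_smul _)
  have hA' : IntervalIntegrable (fun s => (τ * (τ - s) ^ (-α)) • f' s) volume 0 τ := by
    have heq : (fun s => (τ * (τ - s) ^ (-α)) • f' s)
        = fun s => ((τ - s) ^ (-α) : ℝ) • (τ • f' s) := by
      funext s; rw [smul_smul, mul_comm]
    rw [heq]
    exact caputo_aux_integrable hτ hrα (hf'cτ.const_smul _)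
  set A := ∫ s in (0 : ℝ)..τ, ((τ - s) ^ (-α) : ℝ) • f' s with hAdef
  set B := ∫ s in (0 : ℝ)..τ, ((τ - s) ^ (-α) : ℝ) • f s with hBdef
  set C := ∫ s in (0 : ℝ)..τ, ((τ - s) ^ (1 - α) : ℝ) • f' s with hCdef
  -- key integration by parts identity
  have key : (1 - α) • B = C + (τ ^ (1 - α)) • f 0 := by
    have hcont : ContinuousOn (fun u : ℝ => ((τ - u) ^ (1 - α) : ℝ) • f u) (Set.Icc 0 τ) :=
      ((Real.continuous_rpow_const (by linarith)).comp
        (continuous_const.sub continuous_id)).continuousOn.smul hfcτ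
    have hderiv : ∀ s ∈ Set.Ioo (0 : ℝ) τ,
        HasDerivWithinAt (fun u : ℝ => ((τ - u) ^ (1 - α) : ℝ) • f u)
          ((-(1 - α) * (τ - s) ^ (-α)) • f s + ((τ - s) ^ (1 - α) : ℝ) • f' s)
          (Set.Ioi s) s := by
      intro s hs
      have hsT : s ∈ Set.Ioo (0 : ℝ) T := ⟨hs.1, lt_of_lt_of_le hs.2 hτT⟩
      have hfd : HasDerivAt f (f' s) s :=
        (hf s (Set.Ioo_subset_Icc_self hsT)).hasDerivAt (Icc_mem_nhds hsT.1 hsT.2)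
      have hpos : 0 < τ - s := by linarith [hs.2]
      have hg : HasDerivAt (fun u : ℝ => ((τ - u) ^ (1 - α) : ℝ))
          (-(1 - α) * (τ - s) ^ (-α)) s := by
        have h1 : HasDerivAt (fun u : ℝ => τ - u) (-1) s := by
          simpa using (hasDerivAt_id s).const_sub τ
        have h2 := (Real.hasDerivAt_rpow_const (p := 1 - α) (Or.inl hpos.ne')).comp s h1
        refine h2.congr_deriv ?_
        rw [show (1 - α - 1 : ℝ) = -α by ring]
        ring
      refine (hg.smul hfd).hasDerivWithinAt.congr_deriv ?_
      abel
    have hint : IntervalIntegrable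
        (fun s => (-(1 - α) * (τ - s) ^ (-α)) • f s + ((τ - s) ^ (1 - α) : ℝ) • f' s)
        volume 0 τ := hB'.add hC
    have hFTC := intervalIntegral.integral_eq_sub_of_hasDeriv_right_of_le
      (f := fun u : ℝ => ((τ - u) ^ (1 - α) : ℝ) • f u)
      (f' := fun s => (-(1 - α) * (τ - s) ^ (-α)) • f s + ((τ - s) ^ (1 - α) : ℝ) • f' s)
      hτ.le hcont hderiv hint
    have hz : ((τ - τ) ^ (1 - α) : ℝ) = 0 := by
      simp [Real.zero_rpow h1α]
    beta_reduce at hFTC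
    rw [hz] at hFTC
    have hsplit :
        (∫ s in (0 : ℝ)..τ,
          ((-(1 - α) * (τ - s) ^ (-α)) • f s + ((τ - s) ^ (1 - α) : ℝ) • f' s))
          = (-(1 - α)) • B + C := by
      rw [intervalIntegral.integral_add hB' hC]
      congr 1
      rw [hBdef, ← intervalIntegral.integral_smul]
      apply intervalIntegral.integral_congr
      intro s _
      show (-(1 - α) * (τ - s) ^ (-α)) • f s = (-(1 - α)) • ((τ - s) ^ (-α) : ℝ) • f s
      rw [smul_smul]
    rw [hsplit] at hFTC
    simp only [zero_smul, zero_sub, sub_zero] at hFTC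
    linear_combination (norm := module) -hFTC
  -- rewrite all integrals pulling out Γ⁻¹
  have hpull : ∀ (G : ℝ → X) (r : ℝ),
      (∫ s in (0 : ℝ)..τ, ((τ - s) ^ r / Γ) • G s)
        = Γ⁻¹ • ∫ s in (0 : ℝ)..τ, ((τ - s) ^ r : ℝ) • G s := by
    intro G r
    rw [← intervalIntegral.integral_smul]
    apply intervalIntegral.integral_congr
    intro s _
    show ((τ - s) ^ r / Γ) • G s = Γ⁻¹ • ((τ - s) ^ r : ℝ) • G s
    rw [smul_smul, div_eq_inv_mul]
  -- split the middle integral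
  have hmid :
      (∫ s in (0 : ℝ)..τ, ((τ - s) ^ (-α) : ℝ) • (f s + s • f' s))
        = B + (τ • A - C) := by
    have hE : IntervalIntegrable (fun s => ((τ - s) ^ (-α) : ℝ) • (s • f' s)) volume 0 τ :=
      caputo_aux_integrable hτ hrα (continuousOn_id.smul hf'cτ)
    have heq : (fun s => ((τ - s) ^ (-α) : ℝ) • (f s + s • f' s))
        = fun s => ((τ - s) ^ (-α) : ℝ) • f s + ((τ - s) ^ (-α) : ℝ) • (s • f' s) :=
      funext fun s => smul_add _ _ _
    rw [heq, intervalIntegral.integral_add hB hE]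
    congr 1
    -- ∫ (τ-s)^(-α) • (s • f' s) = τ • A - C
    have hptw : ∀ s ∈ Set.uIcc (0 : ℝ) τ,
        ((τ - s) ^ (-α) : ℝ) • (s • f' s)
          = (τ * (τ - s) ^ (-α)) • f' s - ((τ - s) ^ (1 - α) : ℝ) • f' s := by
      intro s hs
      rw [Set.uIcc_of_le hτ.le] at hs
      have hnn : 0 ≤ τ - s := by linarith [hs.2]
      have hfac : ((τ - s) ^ (1 - α) : ℝ) = (τ - s) * (τ - s) ^ (-α) := by
        rcases eq_or_lt_of_le hnn with h | h
        · rw [← h]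
          simp [Real.zero_rpow h1α]
        · rw [show (1 - α : ℝ) = 1 + (-α) by ring, Real.rpow_add h, Real.rpow_one]
      rw [smul_smul, hfac, ← sub_smul]
      congr 1
      ring
    rw [intervalIntegral.integral_congr hptw, intervalIntegral.integral_sub hA' hC]
    congr 1
    rw [hAdef, ← intervalIntegral.integral_smul]
    apply intervalIntegral.integral_congr
    intro s _
    show (τ * (τ - s) ^ (-α)) • f' s = τ • ((τ - s) ^ (-α) : ℝ) • f' s
    rw [smul_smul]
  rw [hpull, hpull, hpull, hmid]
  have hτpow : τ * (τ ^ (-α) / Γ) = Γ⁻¹ * τ ^ (1 - α) := by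
    rw [show (1 - α : ℝ) = 1 + (-α) by ring, Real.rpow_add hτ, Real.rpow_one]
    ring
  rw [hτpow, mul_smul]
  linear_combination (norm := module) (-Γ⁻¹ : ℝ) • key
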